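/- Fix integer r ≥ 1 and define A_m(r) = ∑_{j=1}^{m} ((-1)^j/(j-1)!) ∑_{k=j}^{m} C(m,k) C(k-1,r-1) (-1)^k. Then A_m(r) + A_m(r+1) = ∑_{j=1}^{m} C(m,j) C(j,r) · (j-r)/(m-r) · 1/(j-1)! for every m > r. -/

import Mathlib

/-- `A_m(r)` from the paper. -/
noncomputable def A (m r : ℕ) : ℚ :=
  ∑ j ∈ Finset.Icc 1 m, ((-1 : ℚ) ^ j / (Nat.factorial (j - 1) : ℚ)) *
    ∑ k ∈ Finset.Icc j m, (m.choose k : ℚ) * ((k - 1).choose (r - 1) : ℚ) * (-1 : ℚ) ^ k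

lemma key (r : ℕ) : ∀ n m j : ℕ, m = j + n → r ≤ j → r < m →
    ∑ k ∈ Finset.Icc j m, (m.choose k : ℚ) * (k.choose r : ℚ) * (-1 : ℚ) ^ k
    = (-1 : ℚ) ^ j * (m.choose j : ℚ) * (j.choose r : ℚ) *
        (((j : ℚ) - r) / ((m : ℚ) - r)) := by
  intro n
  induction n with
  | zero =>
    intro m j hmj hrj hrm
    have hmj' : j = m := by omega
    subst hmj'
    rw [Finset.Icc_self, Finset.sum_singleton]
    have h : ((j : ℚ) - r) ≠ 0 := by
      have : (r : ℚ) < j := by exact_mod_cast hrm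
      linarith
    rw [div_self h]
    simp [mul_comm]
  | succ n ih =>
    intro m j hmj hrj hrm
    have hjm : j < m := by omega
    have hins : Finset.Icc j m = insert j (Finset.Icc (j+1) m) := by
      rw [Finset.Icc_add_one_left_eq_Ioc, Finset.Ioc_insert_left hjm.le]
    rw [hins, Finset.sum_insert (by simp), ih m (j+1) (by omega) (by omega) hrm]
    have hMr : (m : ℚ) - r ≠ 0 := by
      have : (r : ℚ) < m := by exact_mod_cast hrm
      linarith
    have h1 : ((m.choose (j+1) : ℚ)) * ((j : ℚ) + 1) = (m.choose j : ℚ) * ((m : ℚ) - j) := by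
      have := congrArg (Nat.cast : ℕ → ℚ) (Nat.choose_succ_right_eq m j)
      push_cast [Nat.cast_sub hjm.le] at this
      linarith [this]
    have h2 : ((j.choose r : ℚ)) * ((j : ℚ) + 1) = ((j+1).choose r : ℚ) * ((j : ℚ) + 1 - r) := by
      have := congrArg (Nat.cast : ℕ → ℚ) (Nat.choose_mul_succ_eq j r)
      push_cast [Nat.cast_sub (by omega : r ≤ j + 1)] at this
      linarith [this]
    field_simp
    linear_combination (norm := (push_cast; ring1)) ((-1:ℚ)^j) * ((m.choose (j+1) : ℚ) * h2 - (j.choose r : ℚ) * h1)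

theorem stmt14 (r m : ℕ) (hr : 1 ≤ r) (hm : r < m) :
    A m r + A m (r + 1) =
      ∑ j ∈ Finset.Icc 1 m,
        (m.choose j : ℚ) * (j.choose r : ℚ) * (((j : ℚ) - r) / ((m : ℚ) - r)) *
          (1 / (Nat.factorial (j - 1) : ℚ)) := by
  unfold A
  rw [← Finset.sum_add_distrib]
  refine Finset.sum_congr rfl ?_
  intro j hj
  rw [Finset.mem_Icc] at hj
  obtain ⟨hj1, hjm⟩ := hj
  rw [← mul_add, ← Finset.sum_add_distrib]
  have hT : ∑ k ∈ Finset.Icc j m,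
      ((m.choose k : ℚ) * ((k-1).choose (r-1) : ℚ) * (-1:ℚ)^k +
        (m.choose k : ℚ) * ((k-1).choose (r+1-1) : ℚ) * (-1:ℚ)^k)
      = ∑ k ∈ Finset.Icc j m, (m.choose k : ℚ) * (k.choose r : ℚ) * (-1:ℚ)^k := by
    refine Finset.sum_congr rfl ?_
    intro k hk
    rw [Finset.mem_Icc] at hk
    have hk1 : 1 ≤ k := le_trans hj1 hk.1
    have hnat : (k-1).choose (r-1) + (k-1).choose r = k.choose r := by
      obtain ⟨k', rfl⟩ : ∃ k', k = k' + 1 := ⟨k - 1, by omega⟩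
      obtain ⟨r', rfl⟩ : ∃ r', r = r' + 1 := ⟨r - 1, by omega⟩
      simp [Nat.choose_succ_succ']
    have hcast : ((k-1).choose (r-1) : ℚ) + ((k-1).choose r : ℚ) = (k.choose r : ℚ) := by
      exact_mod_cast congrArg (Nat.cast : ℕ → ℚ) hnat
    simp only [Nat.add_sub_cancel]
    rw [← hcast]; ring
  rw [hT]
  have hneg : ((-1:ℚ)^j) * ((-1:ℚ)^j) = 1 := by
    rw [← pow_add, ← two_mul, pow_mul]; norm_num
  by_cases hjr : r ≤ j
  · rw [key r (m - j) m j (by omega) hjr hm]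
    linear_combination ((m.choose j : ℚ) * (j.choose r : ℚ) * (((j:ℚ) - r)/((m:ℚ) - r)) * (1/(Nat.factorial (j-1) : ℚ))) * hneg
  · push_neg at hjr
    have hsub : ∑ k ∈ Finset.Icc j m, (m.choose k : ℚ) * (k.choose r : ℚ) * (-1:ℚ)^k
        = ∑ k ∈ Finset.Icc r m, (m.choose k : ℚ) * (k.choose r : ℚ) * (-1:ℚ)^k := by
      symm
      apply Finset.sum_subset
      · intro x hx
        rw [Finset.mem_Icc] at *
        omega
      · intro x hx hx'
        rw [Finset.mem_Icc] at hx
        rw [Finset.mem_Icc] at hx'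
        have hxr : x < r := by omega
        simp [Nat.choose_eq_zero_of_lt hxr]
    rw [hsub, key r (m - r) m r (by omega) le_rfl hm]
    simp [Nat.choose_eq_zero_of_lt hjr]
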